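/- Let V be a type and let d : V → V → ℝ satisfy the directed triangle inequality d(a,c) ≤ d(a,b) + d(b,c) for all a,b,c ∈ V. Let u, v, x, y, s ∈ V and let w ∈ ℝ be the weight of an edge (x,y) lying on a shortest path from u to v, i.e., d(u,v) = d(u,x) + w + d(y,v). If 2·d(x,s) + d(s,y) ≤ 2·w + d(y,s), then d(u,s) + d(s,v) ≤ 2·d(u,v) + d(v,u). -/
import Mathlib

/-- Core inequality in the stretch analysis of the 3-roundtrip spanner (Lemma 4.1):
if the edge `(x,y)` of weight `w` lies on a shortest `u → v` path and is removed
because of eliminator `s`, then `d(u,s) + d(s,v) ≤ 2·d(u,v) + d(v,u)`. -/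
theorem three_spanner_stretch {V : Type*} (d : V → V → ℝ)
    (htri : ∀ a b c : V, d a c ≤ d a b + d b c)
    (u v x y s : V) (w : ℝ)
    (hpath : d u v = d u x + w + d y v)
    (helim : 2 * d x s + d s y ≤ 2 * w + d y s) :
    d u s + d s v ≤ 2 * d u v + d v u := by
  have h1 := htri u x s
  have h2 := htri s y v
  have h3 := htri y v s
  have h4 := htri v u s
  have h5 := htri u x s
  have h6 := htri v u x
  linarith [htri y v u, htri v u x, htri u x s]
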